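/- For every a ∈ ℝ^n, the dimension of tconv(pos(a)) — i.e., the rank (finrank over ℝ) of the linear span of tconv({t·a : t ≥ 0}) — equals the cardinality of the set {c ∈ ℝ : c ≠ 0 and a_i = c for some i} of distinct nonzero coordinates of a. -/

import Mathlib

/-- A set `U ⊆ ℝ^n` is tropically convex (min-plus convention). -/
def TropConvex {n : ℕ} (U : Set (Fin n → ℝ)) : Prop :=
  ∀ x ∈ U, ∀ y ∈ U, ∀ a b : ℝ, min a b = 0 →
    (fun i => min (a + x i) (b + y i)) ∈ U

/-- The tropical convex hull: the intersection of all tropically convex sets containing `U`. -/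
def tconv {n : ℕ} (U : Set (Fin n → ℝ)) : Set (Fin n → ℝ) :=
  ⋂₀ {V | TropConvex V ∧ U ⊆ V}

lemma subset_tconv {n : ℕ} (U : Set (Fin n → ℝ)) : U ⊆ tconv U :=
  fun _ hx _ hV => hV.2 hx

lemma tropConvex_tconv {n : ℕ} (U : Set (Fin n → ℝ)) : TropConvex (tconv U) := by
  intro x hx y hy α β hab V hV
  exact hV.1 x (hx V hV) y (hy V hV) α β hab

lemma tconv_le {n : ℕ} {U V : Set (Fin n → ℝ)} (hV : TropConvex V) (hUV : U ⊆ V) :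
    tconv U ⊆ V := fun _ hx => hx V ⟨hV, hUV⟩

lemma tentPos (c b1 b2 d : ℝ) (h1 : b1 < c) (h2 : c < b2)
    (hd : d ≤ b1 ∨ d = c ∨ b2 ≤ d) :
    (c - b1)⁻¹ * (min d c - min d b1) - (b2 - c)⁻¹ * (min d b2 - min d c)
      = if d = c then 1 else 0 := by
  have e1 : c - b1 ≠ 0 := by intro h; nlinarith
  have e2 : b2 - c ≠ 0 := by intro h; nlinarith
  rcases hd with hd | rfl | hd
  · rw [if_neg (by linarith)]
    rw [min_eq_left (by linarith), min_eq_left hd, min_eq_left (by linarith)]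
    ring
  · rw [if_pos rfl, min_self, min_eq_right h1.le, min_eq_left h2.le]
    field_simp
    ring
  · rw [if_neg (by linarith)]
    rw [min_eq_right (by linarith), min_eq_right (by linarith), min_eq_right hd]
    field_simp
    ring

lemma tentNeg (c θ1 θ2 d : ℝ) (h1 : θ1 < c) (h2 : c < θ2)
    (hd : d ≤ θ1 ∨ d = c ∨ θ2 ≤ d) :
    (θ2 - c)⁻¹ * (min 0 (d - c) - min 0 (d - θ2)) -
        (c - θ1)⁻¹ * (min 0 (d - θ1) - min 0 (d - c))
      = if d = c then 1 else 0 := by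
  have e1 : c - θ1 ≠ 0 := by intro h; nlinarith
  have e2 : θ2 - c ≠ 0 := by intro h; nlinarith
  rcases hd with hd | rfl | hd
  · rw [if_neg (by linarith)]
    rw [min_eq_right (by linarith : d - c ≤ 0), min_eq_right (by linarith : d - θ2 ≤ 0),
      min_eq_right (by linarith : d - θ1 ≤ 0)]
    field_simp
    ring
  · rw [if_pos rfl, sub_self, min_self, min_eq_right (by linarith : d - θ2 ≤ 0),
      min_eq_left (by linarith : (0:ℝ) ≤ d - θ1)]
    field_simp
    ring
  · rw [if_neg (by linarith)]
    rw [min_eq_left (by linarith : (0:ℝ) ≤ d - c), min_eq_left (by linarith : (0:ℝ) ≤ d - θ2),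
      min_eq_left (by linarith : (0:ℝ) ≤ d - θ1)]
    ring

/-- Separation points around `c` avoiding the finite set `C`. -/
lemma exists_sep (C : Set ℝ) (hC : C.Finite) (c : ℝ) :
    ∃ b1 b2 : ℝ, b1 < c ∧ c < b2 ∧ (0 < c → 0 ≤ b1) ∧ (c < 0 → b2 ≤ 0) ∧
      ∀ d ∈ C, d ≤ b1 ∨ d = c ∨ b2 ≤ d := by
  classical
  letI : Fintype ↥C := hC.fintype
  set base1 : ℝ := if 0 < c then 0 else c - 1 with hbase1
  set base2 : ℝ := if c < 0 then 0 else c + 1 with hbase2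
  have hbase1_lt : base1 < c := by
    rw [hbase1]; split <;> [assumption; linarith]
  have hbase2_gt : c < base2 := by
    rw [hbase2]; split <;> [assumption; linarith]
  set lo := ((insert base1 (hC.toFinset.filter (· < c))).max'
    (Finset.insert_nonempty _ _)) with hlo
  set hi := ((insert base2 (hC.toFinset.filter (c < ·))).min'
    (Finset.insert_nonempty _ _)) with hhi
  have hlo_lt : lo < c := by
    rw [hlo, Finset.max'_lt_iff]
    intro x hx
    rcases Finset.mem_insert.1 hx with rfl | hx
    · exact hbase1_lt
    · exact (Finset.mem_filter.1 hx).2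
  have hhi_gt : c < hi := by
    rw [hhi, Finset.lt_min'_iff]
    intro x hx
    rcases Finset.mem_insert.1 hx with rfl | hx
    · exact hbase2_gt
    · exact (Finset.mem_filter.1 hx).2
  refine ⟨(lo + c) / 2, (c + hi) / 2, by linarith, by linarith, ?_, ?_, ?_⟩
  · intro hc
    have : (0:ℝ) ≤ lo := by
      refine Finset.le_max' _ _ ?_
      rw [hlo, hbase1] at *
      rw [if_pos hc]
      exact Finset.mem_insert_self _ _
    linarith
  · intro hc
    have : hi ≤ 0 := by
      refine Finset.min'_le _ _ ?_
      rw [hhi, hbase2] at *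
      rw [if_pos hc]
      exact Finset.mem_insert_self _ _
    linarith
  · intro d hd
    rcases lt_trichotomy d c with h | h | h
    · left
      have : d ≤ lo := by
        rw [hlo]
        refine Finset.le_max' _ _ ?_
        refine Finset.mem_insert_of_mem (Finset.mem_filter.2 ⟨hC.mem_toFinset.2 hd, ?_⟩)
        exact h
      linarith
    · exact Or.inr (Or.inl h)
    · right; right
      have : hi ≤ d := by
        rw [hhi]
        refine Finset.min'_le _ _ ?_
        refine Finset.mem_insert_of_mem (Finset.mem_filter.2 ⟨hC.mem_toFinset.2 hd, ?_⟩)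
        exact h
      linarith

theorem dim_tconv_ray (n : ℕ) (a : Fin n → ℝ) :
    Module.finrank ℝ
        (Submodule.span ℝ (tconv {x : Fin n → ℝ | ∃ t : ℝ, 0 ≤ t ∧ x = t • a})) =
      {c : ℝ | c ≠ 0 ∧ ∃ i, a i = c}.ncard := by
  classical
  set S : Set (Fin n → ℝ) := {x : Fin n → ℝ | ∃ t : ℝ, 0 ≤ t ∧ x = t • a} with hSdef
  set C : Set ℝ := {c : ℝ | c ≠ 0 ∧ ∃ i, a i = c} with hCdef
  set W : Submodule ℝ (Fin n → ℝ) := Submodule.span ℝ (tconv S) with hWdef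
  -- C is finite
  have hC : C.Finite := by
    apply (Set.finite_range a).subset
    rintro c ⟨-, i, rfl⟩
    exact ⟨i, rfl⟩
  letI : Fintype ↥C := hC.fintype
  -- basic members of S
  have hA : a ∈ S := ⟨1, zero_le_one, (one_smul ℝ a).symm⟩
  have hZ : (0 : Fin n → ℝ) ∈ S := ⟨0, le_refl 0, (zero_smul ℝ a).symm⟩
  have h2A : (2 : ℝ) • a ∈ S := ⟨2, by norm_num, rfl⟩
  have hTC := tropConvex_tconv S
  -- truncation vectors
  have hmemT : ∀ b : ℝ, 0 ≤ b → (fun i => min (a i) b) ∈ tconv S := by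
    intro b hb
    have h := hTC a (subset_tconv S hA) 0 (subset_tconv S hZ) 0 b (min_eq_left hb)
    simpa using h
  have hmemF : ∀ μ : ℝ, 0 ≤ μ → (fun i => min (a i) (μ + 2 * a i)) ∈ tconv S := by
    intro μ hμ
    have h := hTC a (subset_tconv S hA) ((2 : ℝ) • a) (subset_tconv S h2A) 0 μ (min_eq_left hμ)
    simpa [smul_eq_mul] using h
  -- the "negative tent" building blocks, in the span
  have hmemG : ∀ θ : ℝ, θ ≤ 0 → (fun i => min 0 (a i - θ)) ∈ W := by
    intro θ hθ
    have hF : (fun i => min (a i) (-θ + 2 * a i)) ∈ W :=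
      Submodule.subset_span (hmemF (-θ) (by linarith))
    have hA' : a ∈ W := Submodule.subset_span (subset_tconv S hA)
    have heq : (fun i => min 0 (a i - θ))
        = (fun i => min (a i) (-θ + 2 * a i)) - a := by
      funext i
      show min 0 (a i - θ) = min (a i) (-θ + 2 * a i) - a i
      rw [← min_sub_sub_right]
      congr 1 <;> ring
    rw [heq]
    exact sub_mem hF hA'
  have hmemT' : ∀ b : ℝ, 0 ≤ b → (fun i => min (a i) b) ∈ W :=
    fun b hb => Submodule.subset_span (hmemT b hb)
  -- the evaluation map
  have hσ : ∀ c : ↥C, ∃ i, a i = ↑c := fun c => c.2.2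
  let σ : ↥C → Fin n := fun c => (hσ c).choose
  have hσa : ∀ c : ↥C, a (σ c) = ↑c := fun c => (hσ c).choose_spec
  set Φ : (Fin n → ℝ) →ₗ[ℝ] (↥C → ℝ) := LinearMap.funLeft ℝ ℝ σ with hΦdef
  -- upper bound submodule
  let V : Submodule ℝ (Fin n → ℝ) :=
    { carrier := {x | (∀ i, a i = 0 → x i = 0) ∧ ∀ i j, a i = a j → x i = x j}
      add_mem' := by
        rintro x y ⟨hx0, hx⟩ ⟨hy0, hy⟩
        exact ⟨fun i h => by simp [hx0 i h, hy0 i h],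
          fun i j h => by simp [hx i j h, hy i j h]⟩
      zero_mem' := ⟨fun _ _ => rfl, fun _ _ _ => rfl⟩
      smul_mem' := by
        rintro t x ⟨hx0, hx⟩
        exact ⟨fun i h => by simp [hx0 i h], fun i j h => by simp [hx i j h]⟩ }
  have hVconv : TropConvex (V : Set (Fin n → ℝ)) := by
    rintro x ⟨hx0, hx⟩ y ⟨hy0, hy⟩ α β hab
    refine ⟨fun i h => ?_, fun i j h => ?_⟩
    · show min (α + x i) (β + y i) = 0
      rw [hx0 i h, hy0 i h, add_zero, add_zero, hab]
    · show min (α + x i) (β + y i) = min (α + x j) (β + y j)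
      rw [hx i j h, hy i j h]
  have hSV : S ⊆ (V : Set (Fin n → ℝ)) := by
    rintro x ⟨t, ht, rfl⟩
    refine ⟨fun i h => ?_, fun i j h => ?_⟩
    · show t * a i = 0
      rw [h, mul_zero]
    · show t * a i = t * a j
      rw [h]
  have hWV : W ≤ V := Submodule.span_le.2 (tconv_le hVconv hSV)
  -- injectivity of Φ on V
  have hker : ∀ x ∈ V, Φ x = 0 → x = 0 := by
    intro x hx hΦ
    obtain ⟨hx0, hxc⟩ := hx
    funext i
    by_cases hi : a i = 0
    · exact hx0 i hi
    · have hcC : a i ∈ C := ⟨hi, i, rfl⟩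
      have h1 : x (σ ⟨a i, hcC⟩) = 0 := congrFun hΦ ⟨a i, hcC⟩
      have h2 : x i = x (σ ⟨a i, hcC⟩) := hxc i _ (by rw [hσa ⟨a i, hcC⟩])
      rw [h2, h1]
      rfl
  -- the tent vectors give surjectivity onto ↥C → ℝ
  have hsingle : ∀ c : ↥C, (Pi.single c 1 : ↥C → ℝ) ∈ Submodule.map Φ W := by
    intro c
    have hc0 : (c : ℝ) ≠ 0 := c.2.1
    obtain ⟨b1, b2, hb1, hb2, hb1pos, hb2neg, hsep⟩ := exists_sep C hC (c : ℝ)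
    have hsep' : ∀ d : ↥C, (d : ℝ) ≤ b1 ∨ (d : ℝ) = (c : ℝ) ∨ b2 ≤ (d : ℝ) :=
      fun d => hsep (d : ℝ) d.2
    rcases hc0.lt_or_gt with hc | hc
    · -- negative case: use G vectors
      have hb2' : b2 ≤ 0 := hb2neg hc
      have hb1' : b1 ≤ 0 := by linarith
      have hc' : (c : ℝ) ≤ 0 := hc.le
      refine ⟨(b2 - (c : ℝ))⁻¹ •
            ((fun i => min 0 (a i - (c : ℝ))) - (fun i => min 0 (a i - b2))) -
          ((c : ℝ) - b1)⁻¹ •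
            ((fun i => min 0 (a i - b1)) - (fun i => min 0 (a i - (c : ℝ)))), ?_, ?_⟩
      · exact sub_mem
          (Submodule.smul_mem _ _ (sub_mem (hmemG _ hc') (hmemG _ hb2')))
          (Submodule.smul_mem _ _ (sub_mem (hmemG _ hb1') (hmemG _ hc')))
      · funext d
        rw [hΦdef]
        simp only [LinearMap.funLeft_apply, Function.comp_apply, Pi.sub_apply,
          Pi.smul_apply, smul_eq_mul]
        rw [hσa d, tentNeg (c : ℝ) b1 b2 (d : ℝ) hb1 hb2 (hsep' d), Pi.single_apply]
        by_cases hdc : d = c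
        · rw [if_pos (by rw [hdc]), if_pos hdc]
        · rw [if_neg (fun h => hdc (Subtype.ext h)), if_neg hdc]
    · -- positive case: use truncation vectors
      have hb1' : (0:ℝ) ≤ b1 := hb1pos hc
      have hb2' : (0:ℝ) ≤ b2 := by linarith
      have hc' : (0:ℝ) ≤ (c : ℝ) := hc.le
      refine ⟨((c : ℝ) - b1)⁻¹ •
            ((fun i => min (a i) (c : ℝ)) - (fun i => min (a i) b1)) -
          (b2 - (c : ℝ))⁻¹ •
            ((fun i => min (a i) b2) - (fun i => min (a i) (c : ℝ))), ?_, ?_⟩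
      · exact sub_mem
          (Submodule.smul_mem _ _ (sub_mem (hmemT' _ hc') (hmemT' _ hb1')))
          (Submodule.smul_mem _ _ (sub_mem (hmemT' _ hb2') (hmemT' _ hc')))
      · funext d
        rw [hΦdef]
        simp only [LinearMap.funLeft_apply, Function.comp_apply, Pi.sub_apply,
          Pi.smul_apply, smul_eq_mul]
        rw [hσa d, tentPos (c : ℝ) b1 b2 (d : ℝ) hb1 hb2 (hsep' d), Pi.single_apply]
        by_cases hdc : d = c
        · rw [if_pos (by rw [hdc]), if_pos hdc]
        · rw [if_neg (fun h => hdc (Subtype.ext h)), if_neg hdc]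
  -- surjectivity
  have hmap : Submodule.map Φ W = ⊤ := by
    rw [eq_top_iff, ← (Pi.basisFun ℝ ↥C).span_eq, Submodule.span_le]
    rintro _ ⟨c, rfl⟩
    rw [Pi.basisFun_apply]
    exact hsingle c
  -- counting
  have hcard : Module.finrank ℝ (↥C → ℝ) = C.ncard := by
    rw [Module.finrank_pi, Set.ncard_eq_toFinset_card', Set.toFinset_card]
  have hub : Module.finrank ℝ W ≤ C.ncard := by
    have hinj : Function.Injective (Φ.domRestrict V) := by
      rw [← LinearMap.ker_eq_bot, eq_bot_iff]
      rintro ⟨x, hx⟩ hmem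
      have hx0 : Φ x = 0 := hmem
      simpa [Submodule.mem_bot, Subtype.ext_iff] using hker x hx hx0
    calc Module.finrank ℝ W ≤ Module.finrank ℝ V := Submodule.finrank_mono hWV
      _ ≤ Module.finrank ℝ (↥C → ℝ) :=
        LinearMap.finrank_le_finrank_of_injective hinj
      _ = C.ncard := hcard
  have hlb : C.ncard ≤ Module.finrank ℝ W := by
    calc C.ncard = Module.finrank ℝ (↥C → ℝ) := hcard.symm
      _ = Module.finrank ℝ (⊤ : Submodule ℝ (↥C → ℝ)) := (finrank_top ℝ _).symm
      _ = Module.finrank ℝ (Submodule.map Φ W) := by rw [hmap]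
      _ ≤ Module.finrank ℝ W := Submodule.finrank_map_le Φ W
  exact le_antisymm hub hlb
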